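/- Fix integers d ≥ 1, n ≥ 1, 1 ≤ m ≤ n and a composition (k_0, …, k_{d−1}) of n, i.e. nonnegative integers with k_0 + … + k_{d−1} = n. Let Q be the marginal on the first m coordinates of the uniform distribution on the type class T(k_0,…,k_{d−1}) ⊆ {0,…,d−1}^n, and let γ be the probability distribution on {0,…,d−1} with γ(j) = k_j/n. Then ∑_{x ∈ {0,…,d−1}^m} |Q(x) − ∏_{i=1}^m γ(x_i)| ≤ 2dm/n. -/

import Mathlib

open scoped BigOperators

/-- The number of occurrences of the symbol `j` in a string `s ∈ {0,…,d-1}^k`. -/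
def symbolCount {k d : ℕ} (s : Fin k → Fin d) (j : Fin d) : ℕ :=
  (Finset.univ.filter fun i => s i = j).card

section PinskerAux
open Real

private noncomputable def hAux (r : ℝ) : ℝ := (r+1) * Real.log r - 2*(r-1)

private lemma hAux_hasDeriv {x : ℝ} (hx : 0 < x) :
    HasDerivAt hAux (Real.log x + (x+1)/x - 2) x := by
  have h1 : HasDerivAt (fun r : ℝ => (r+1) * Real.log r) (1 * Real.log x + (x+1) * x⁻¹) x := by
    exact ((hasDerivAt_id x).add_const 1).mul (Real.hasDerivAt_log hx.ne')
  have h2 : HasDerivAt (fun r : ℝ => 2*(r-1)) 2 x := by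
    simpa using ((hasDerivAt_id x).sub_const 1).const_mul 2
  have : HasDerivAt hAux _ x := h1.sub h2
  convert this using 1
  field_simp

private lemma hAux_mono : MonotoneOn hAux (Set.Ioi (0:ℝ)) := by
  have hderiv : ∀ x ∈ interior (Set.Ioi (0:ℝ)), 0 ≤ deriv hAux x := by
    rw [interior_Ioi]
    intro x hx
    rw [(hAux_hasDeriv hx).deriv]
    have h1 : 1 - x⁻¹ ≤ Real.log x := Real.one_sub_inv_le_log_of_pos hx
    have hx0 : x ≠ 0 := ne_of_gt hx
    have : (x+1)/x = 1 + x⁻¹ := by field_simp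
    rw [this]; linarith
  refine monotoneOn_of_deriv_nonneg (convex_Ioi 0) ?_ ?_ hderiv
  · apply ContinuousOn.sub
    · exact (continuousOn_id.add continuousOn_const).mul
        (Real.continuousOn_log.mono (by intro x hx; simpa using ne_of_gt hx))
    · fun_prop
  · rw [interior_Ioi]
    intro x hx
    exact (hAux_hasDeriv hx).differentiableAt.differentiableWithinAt

private noncomputable def gAux (r : ℝ) : ℝ := (2*r+4) * (r * Real.log r - r + 1) - 3*(r-1)^2

private lemma gAux_hasDeriv {x : ℝ} (hx : 0 < x) :
    HasDerivAt gAux (4 * hAux x) x := by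
  have hl : HasDerivAt (fun r : ℝ => r * Real.log r) (Real.log x + 1) x := by
    have : HasDerivAt (fun r : ℝ => r * Real.log r) _ x := (hasDerivAt_id' x).mul (Real.hasDerivAt_log hx.ne')
    convert this using 1
    field_simp
  have h1 : HasDerivAt (fun r : ℝ => r * Real.log r - r + 1) (Real.log x) x := by
    simpa using (hl.sub (hasDerivAt_id x)).add_const 1
  have h2 : HasDerivAt (fun r : ℝ => 2*r+4) 2 x := by
    simpa using ((hasDerivAt_id x).const_mul 2).add_const 4
  have h3 : HasDerivAt (fun r : ℝ => 3*(r-1)^2) (3*(2*(x-1))) x := by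
    have : HasDerivAt (fun r : ℝ => (r-1)^2) (2*(x-1)) x := by
      simpa using ((hasDerivAt_id' x).sub_const 1).fun_pow 2
    simpa [mul_comm] using this.const_mul 3
  have : HasDerivAt gAux _ x := (h2.mul h1).sub h3
  convert this using 1
  unfold hAux
  ring

private lemma gAux_cont : ContinuousOn gAux (Set.Ioi (0:ℝ)) := by
  have hlog : ContinuousOn (fun r : ℝ => r * Real.log r) (Set.Ioi (0:ℝ)) :=
    continuousOn_id.mul (Real.continuousOn_log.mono (by intro x hx; simpa using ne_of_gt hx))
  apply ContinuousOn.sub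
  · exact ((continuousOn_const.mul continuousOn_id).add continuousOn_const).mul
      ((hlog.sub continuousOn_id).add continuousOn_const)
  · fun_prop

private lemma gAux_nonneg {r : ℝ} (hr : 0 ≤ r) : 0 ≤ gAux r := by
  rcases eq_or_lt_of_le hr with h | hr
  · simp [gAux, ← h]; norm_num
  have h1 : hAux 1 = 0 := by simp [hAux]
  have g1 : gAux 1 = 0 := by simp [gAux]
  rcases le_or_gt 1 r with h | h
  · -- monotone on Ici 1
    have mono : MonotoneOn gAux (Set.Ici (1:ℝ)) := by
      refine monotoneOn_of_deriv_nonneg (convex_Ici 1) (gAux_cont.mono ?_) ?_ ?_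
      · intro x hx; simp at hx ⊢; linarith
      · rw [interior_Ici]
        intro x hx
        have : (0:ℝ) < x := lt_trans one_pos hx
        exact (gAux_hasDeriv this).differentiableAt.differentiableWithinAt
      · rw [interior_Ici]
        intro x hx
        have hx0 : (0:ℝ) < x := lt_trans one_pos hx
        rw [(gAux_hasDeriv hx0).deriv]
        have : hAux 1 ≤ hAux x := hAux_mono (by simp) (by simp [hx0]) (le_of_lt hx)
        rw [h1] at this; linarith
    have := mono (by simp) (by simpa using h) h
    rw [g1] at this; linarith
  · -- antitone on Icc r 1 ⊆ Ioi 0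
    have anti : AntitoneOn gAux (Set.Icc r 1) := by
      refine antitoneOn_of_deriv_nonpos (convex_Icc r 1) (gAux_cont.mono ?_) ?_ ?_
      · intro x hx; simp at hx ⊢; linarith
      · rw [interior_Icc]
        intro x hx
        have : (0:ℝ) < x := lt_of_le_of_lt hr.le (by exact hx.1)
        exact (gAux_hasDeriv this).differentiableAt.differentiableWithinAt
      · rw [interior_Icc]
        intro x hx
        have hx0 : (0:ℝ) < x := lt_of_le_of_lt hr.le hx.1
        rw [(gAux_hasDeriv hx0).deriv]
        have : hAux x ≤ hAux 1 := hAux_mono (by simp [hx0]) (by simp) (le_of_lt hx.2)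
        rw [h1] at this; linarith
    have := anti (Set.mem_Icc.2 ⟨le_refl r, h.le⟩) (Set.mem_Icc.2 ⟨h.le, le_refl 1⟩) h.le
    rw [g1] at this; linarith

/-- key scalar inequality for Pinsker -/
lemma pinsker_key {r : ℝ} (hr : 0 ≤ r) :
    3 * (r-1)^2 ≤ (2*r+4) * (r * Real.log r - r + 1) := by
  have := gAux_nonneg hr
  unfold gAux at this
  linarith

/-- Pinsker's inequality for finite probability vectors. -/
lemma pinsker_finset {ι : Type*} [Fintype ι] (q p : ι → ℝ)
    (hq0 : ∀ i, 0 ≤ q i) (hp0 : ∀ i, 0 ≤ p i)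
    (hq1 : ∑ i, q i = 1) (hp1 : ∑ i, p i = 1)
    (habs : ∀ i, p i = 0 → q i = 0) :
    (∑ i, |q i - p i|)^2 ≤ 2 * ∑ i, q i * Real.log (q i / p i) := by
  classical
  set f : ι → ℝ := fun i => (2 * q i + 4 * p i)/3 with hf
  set g : ι → ℝ := fun i => q i * Real.log (q i / p i) - q i + p i with hg
  have key : ∀ i, 3 * (q i - p i)^2 ≤ (2 * q i + 4 * p i) * g i := by
    intro i
    rcases eq_or_lt_of_le (hp0 i) with h | h
    · have hqi : q i = 0 := habs i h.symm
      simp [hg, hqi, ← h]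
    · have hkey := pinsker_key (r := q i / p i) (div_nonneg (hq0 i) (hp0 i))
      have hp' : p i ≠ 0 := ne_of_gt h
      have e1 : p i ^ 2 * (3 * (q i / p i - 1)^2) = 3 * (q i - p i)^2 := by
        field_simp
      have e2 : p i ^ 2 * ((2*(q i / p i)+4) * ((q i / p i) * Real.log (q i / p i) - (q i / p i) + 1))
          = (2 * q i + 4 * p i) * g i := by
        simp only [hg]
        field_simp
      calc 3 * (q i - p i)^2 = p i ^ 2 * (3 * (q i / p i - 1)^2) := e1.symm
        _ ≤ p i ^ 2 * ((2*(q i / p i)+4) * ((q i / p i) * Real.log (q i / p i) - (q i / p i) + 1)) := by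
            apply mul_le_mul_of_nonneg_left hkey (sq_nonneg _)
        _ = (2 * q i + 4 * p i) * g i := e2
  have hg0 : ∀ i, 0 ≤ g i := by
    intro i
    rcases eq_or_lt_of_le (by have := hq0 i; have := hp0 i; linarith : (0:ℝ) ≤ 2 * q i + 4 * p i) with h | h
    · have hq : q i = 0 := by have := hq0 i; have := hp0 i; linarith
      have hp : p i = 0 := by have := hq0 i; have := hp0 i; linarith
      simp [hg, hq, hp]
    · have h4 : 0 ≤ (2 * q i + 4 * p i) * g i := le_trans (by positivity) (key i)
      by_contra hneg
      push_neg at hneg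
      have := mul_neg_of_pos_of_neg h hneg
      linarith
  have hf0 : ∀ i, 0 ≤ f i := fun i => by
    have := hq0 i; have := hp0 i; simp only [hf]; positivity
  have hfg : ∀ i, (q i - p i)^2 ≤ f i * g i := by
    intro i
    have := key i
    have e : f i * g i = ((2 * q i + 4 * p i) * g i)/3 := by simp only [hf]; ring
    rw [e, le_div_iff₀ (by norm_num : (0:ℝ) < 3)]
    linarith
  have step1 : ∑ i, |q i - p i| ≤ ∑ i, Real.sqrt (f i * g i) := by
    apply Finset.sum_le_sum
    intro i _
    rw [← Real.sqrt_sq_eq_abs]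
    exact Real.sqrt_le_sqrt (hfg i)
  have step2 : (∑ i, Real.sqrt (f i * g i))^2 ≤ (∑ i, f i) * (∑ i, g i) := by
    apply Finset.sum_sq_le_sum_mul_sum_of_sq_eq_mul
    · intro i _; exact hf0 i
    · intro i _; exact hg0 i
    · intro i _
      exact Real.sq_sqrt (mul_nonneg (hf0 i) (hg0 i))
  have hsf : (∑ i, f i) = 2 := by
    simp only [hf]
    rw [← Finset.sum_div, Finset.sum_add_distrib, ← Finset.mul_sum, ← Finset.mul_sum, hq1, hp1]
    norm_num
  have hsg : (∑ i, g i) = ∑ i, q i * Real.log (q i / p i) := by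
    simp only [hg]
    rw [Finset.sum_add_distrib, Finset.sum_sub_distrib, hq1, hp1]
    ring
  have habs0 : 0 ≤ ∑ i, |q i - p i| := Finset.sum_nonneg fun i _ => abs_nonneg _
  have hs0 : 0 ≤ ∑ i, Real.sqrt (f i * g i) := Finset.sum_nonneg fun i _ => Real.sqrt_nonneg _
  calc (∑ i, |q i - p i|)^2 ≤ (∑ i, Real.sqrt (f i * g i))^2 := by
        apply pow_le_pow_left₀ habs0 step1
    _ ≤ (∑ i, f i) * (∑ i, g i) := step2
    _ = 2 * ∑ i, q i * Real.log (q i / p i) := by rw [hsf, hsg]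

end PinskerAux

namespace DeFinettiAux
open Finset

lemma sum_symbolCount {d i : ℕ} (x : Fin i → Fin d) : ∑ j, symbolCount x j = i := by
  have := Finset.card_eq_sum_card_fiberwise
    (s := (univ : Finset (Fin i))) (t := (univ : Finset (Fin d))) (f := x)
    (fun a _ => mem_univ _)
  simp only [card_univ, Fintype.card_fin] at this
  simpa [symbolCount] using this.symm

lemma symbolCount_comp {d N : ℕ} (s : Fin N → Fin d) (σ : Equiv.Perm (Fin N)) (j : Fin d) :
    symbolCount (s ∘ σ) j = symbolCount s j := by
  unfold symbolCount
  apply Finset.card_bij (fun i _ => σ i)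
  · intro a ha
    simp only [mem_filter, mem_univ, true_and, Function.comp_apply] at ha ⊢
    exact ha
  · intro a _ b _ h
    exact σ.injective h
  · intro b hb
    refine ⟨σ.symm b, ?_, by simp⟩
    simp only [mem_filter, mem_univ, true_and, Function.comp_apply] at hb ⊢
    simpa using hb

lemma symbolCount_snoc {d i : ℕ} (x : Fin i → Fin d) (b : Fin d) (a : Fin d) :
    symbolCount (Fin.snoc x b) a = symbolCount x a + if b = a then 1 else 0 := by
  unfold symbolCount
  rw [Finset.card_filter, Finset.card_filter, Fin.sum_univ_castSucc]
  simp [Fin.snoc_castSucc, Fin.snoc_last]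

/-- number of positions `< i` where `s` takes value `a`, when first `i` coords of `s` are `x`. -/
lemma prefix_count {d n i : ℕ} (hi : i ≤ n) (s : Fin n → Fin d) (x : Fin i → Fin d)
    (hpre : ∀ l : Fin i, s (Fin.castLE hi l) = x l) (a : Fin d) :
    (univ.filter fun p : Fin n => (p : ℕ) < i ∧ s p = a).card = symbolCount x a := by
  unfold symbolCount
  symm
  apply Finset.card_bij (fun l _ => Fin.castLE hi l)
  · intro l hl
    simp only [mem_filter, mem_univ, true_and] at hl ⊢
    exact ⟨l.isLt, by rw [hpre l]; exact hl⟩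
  · intro l1 _ l2 _ h
    exact Fin.castLE_injective hi h
  · intro p hp
    simp only [mem_filter, mem_univ, true_and] at hp
    refine ⟨⟨(p : ℕ), hp.1⟩, ?_, Fin.ext rfl⟩
    simp only [mem_filter, mem_univ, true_and]
    rw [← hpre ⟨(p : ℕ), hp.1⟩]
    have e : Fin.castLE hi ⟨(p : ℕ), hp.1⟩ = p := Fin.ext rfl
    rw [e]
    exact hp.2

lemma suffix_count {d n i : ℕ} (hi : i ≤ n) (s : Fin n → Fin d) (x : Fin i → Fin d)
    (hpre : ∀ l : Fin i, s (Fin.castLE hi l) = x l) (a : Fin d) :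
    symbolCount x a + (univ.filter fun p : Fin n => i ≤ (p : ℕ) ∧ s p = a).card
      = symbolCount s a := by
  rw [← prefix_count hi s x hpre a]
  have h1 : (univ.filter fun p : Fin n => (p : ℕ) < i ∧ s p = a)
      = (univ.filter fun p : Fin n => s p = a).filter (fun p : Fin n => (p : ℕ) < i) := by
    rw [Finset.filter_filter]
    apply Finset.filter_congr
    intro p _
    constructor
    · exact fun h => ⟨h.2, h.1⟩
    · exact fun h => ⟨h.2, h.1⟩
  have h2 : (univ.filter fun p : Fin n => i ≤ (p : ℕ) ∧ s p = a)
      = (univ.filter fun p : Fin n => s p = a).filter (fun p : Fin n => ¬ (p : ℕ) < i) := by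
    rw [Finset.filter_filter]
    apply Finset.filter_congr
    intro p _
    constructor
    · exact fun h => ⟨h.2, not_lt.mpr h.1⟩
    · exact fun h => ⟨not_lt.mp h.2, h.1⟩
  rw [h1, h2, Finset.card_filter_add_card_filter_not]
  rfl


variable (d n : ℕ) (k : Fin d → ℕ)

def TC : Finset (Fin n → Fin d) := univ.filter fun s => ∀ j, symbolCount s j = k j

def Cnt {i : ℕ} (hi : i ≤ n) (x : Fin i → Fin d) : ℕ :=
  ((TC d n k).filter fun s => ∀ l : Fin i, s (Fin.castLE hi l) = x l).card

lemma sum_Cnt {i : ℕ} (hi : i ≤ n) :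
    ∑ x : Fin i → Fin d, Cnt d n k hi x = (TC d n k).card := by
  rw [Finset.card_eq_sum_card_fiberwise
    (f := fun s l => s (Fin.castLE hi l)) (t := (univ : Finset (Fin i → Fin d)))
    (fun s _ => mem_univ _)]
  apply Finset.sum_congr rfl
  intro x _
  unfold Cnt
  congr 1
  apply Finset.filter_congr
  intro s _
  constructor
  · intro h
    funext l
    exact h l
  · intro h l
    exact congrFun h l

lemma symbolCount_le_of_prefix {i : ℕ} (hi : i ≤ n) (x : Fin i → Fin d)
    {s : Fin n → Fin d} (hs : s ∈ TC d n k)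
    (hpre : ∀ l : Fin i, s (Fin.castLE hi l) = x l) (a : Fin d) :
    symbolCount x a ≤ k a := by
  have hTC : symbolCount s a = k a := by
    simp only [TC, mem_filter] at hs
    exact hs.2 a
  have := DeFinettiAux.suffix_count hi s x hpre a
  omega

lemma Cnt_le_imp {i : ℕ} (hi : i ≤ n) (x : Fin i → Fin d)
    (hne : Cnt d n k hi x ≠ 0) (a : Fin d) : symbolCount x a ≤ k a := by
  obtain ⟨s, hs⟩ := Finset.card_ne_zero.mp hne
  rw [mem_filter] at hs
  exact symbolCount_le_of_prefix d n k hi x hs.1 hs.2 a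

lemma card_tail_positions {i : ℕ} (hi : i ≤ n) :
    (univ.filter fun p : Fin n => i ≤ (p : ℕ)).card = n - i := by
  symm
  have : n - i = Fintype.card (Fin (n - i)) := (Fintype.card_fin _).symm
  rw [this, ← Finset.card_univ]
  apply Finset.card_bij (fun (t : Fin (n - i)) _ => (⟨i + (t : ℕ), by omega⟩ : Fin n))
  · intro t _
    simp only [mem_filter, mem_univ, true_and]
    omega
  · intro t1 _ t2 _ h
    have := congrArg Fin.val h
    simp only at this
    exact Fin.ext (by omega)
  · intro p hp
    simp only [mem_filter, mem_univ, true_and] at hp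
    refine ⟨⟨(p : ℕ) - i, by omega⟩, mem_univ _, Fin.ext ?_⟩
    simp only
    omega

/-- The key double-counting (swap) identity. -/
lemma Cnt_succ {i : ℕ} (hi : i + 1 ≤ n) (x : Fin i → Fin d) (a : Fin d) :
    Cnt d n k hi (Fin.snoc x a) * (n - i) =
      Cnt d n k (Nat.le_of_succ_le hi) x * (k a - symbolCount x a) := by
  classical
  have hin : i < n := hi
  set pi : Fin n := ⟨i, hin⟩ with hpi
  set X : Finset (Fin n → Fin d) :=
    (TC d n k).filter (fun s => ∀ l : Fin i, s (Fin.castLE (Nat.le_of_succ_le hi) l) = x l) with hX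
  set Y : Finset (Fin n → Fin d) :=
    (TC d n k).filter (fun s => ∀ l : Fin (i+1), s (Fin.castLE hi l) = (Fin.snoc x a : Fin (i+1) → Fin d) l) with hY
  -- sigma sets
  set B := X.sigma (fun s => univ.filter fun p : Fin n => i ≤ (p : ℕ) ∧ s p = a) with hB
  set A := Y.sigma (fun _ => univ.filter fun p : Fin n => i ≤ (p : ℕ)) with hA
  have cardA : A.card = Cnt d n k hi (Fin.snoc x a) * (n - i) := by
    rw [hA, Finset.card_sigma]
    rw [Finset.sum_const, card_tail_positions n (Nat.le_of_succ_le hi), smul_eq_mul]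
    rfl
  have cardB : B.card = Cnt d n k (Nat.le_of_succ_le hi) x * (k a - symbolCount x a) := by
    rw [hB, Finset.card_sigma]
    have : ∀ s ∈ X, (univ.filter fun p : Fin n => i ≤ (p : ℕ) ∧ s p = a).card
        = k a - symbolCount x a := by
      intro s hs
      rw [mem_filter] at hs
      have h1 := DeFinettiAux.suffix_count (Nat.le_of_succ_le hi) s x hs.2 a
      have h2 : symbolCount s a = k a := by
        have := hs.1; simp only [TC, mem_filter] at this; exact this.2 a
      omega
    rw [Finset.sum_congr rfl this, Finset.sum_const, smul_eq_mul]
    rfl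
  rw [← cardA, ← cardB]
  -- bijection between B and A by swapping positions pi and p
  apply Finset.card_bij' (fun sp _ => (⟨sp.1 ∘ (Equiv.swap pi sp.2), sp.2⟩ : (_ : Fin n → Fin d) × Fin n))
    (fun sp _ => (⟨sp.1 ∘ (Equiv.swap pi sp.2), sp.2⟩ : (_ : Fin n → Fin d) × Fin n))
  · -- maps A into B
    rintro ⟨s, p⟩ hsp
    rw [hA, Finset.mem_sigma] at hsp
    obtain ⟨hsY, hp0⟩ := hsp
    have hp : i ≤ (p : ℕ) := by
      simpa using hp0
    rw [hY, mem_filter] at hsY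
    have hsT : s ∈ TC d n k := hsY.1
    have hpre : ∀ l : Fin (i+1), s (Fin.castLE hi l) = (Fin.snoc x a : Fin (i+1) → Fin d) l :=
      hsY.2
    show (⟨s ∘ (Equiv.swap pi p), p⟩ : (_ : Fin n → Fin d) × Fin n) ∈ B
    rw [hB, Finset.mem_sigma]
    constructor
    · rw [hX, mem_filter]
      constructor
      · simp only [TC, mem_filter] at hsT ⊢
        exact ⟨mem_univ _, fun j => by
          rw [DeFinettiAux.symbolCount_comp s (Equiv.swap pi p) j]; exact hsT.2 j⟩
      · intro l
        have hne1 : Fin.castLE (Nat.le_of_succ_le hi) l ≠ pi := by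
          intro h
          have hv : (l : ℕ) = i := congrArg Fin.val h
          have := l.isLt
          omega
        have hne2 : Fin.castLE (Nat.le_of_succ_le hi) l ≠ p := by
          intro h
          have hv : (l : ℕ) = (p : ℕ) := congrArg Fin.val h
          have := l.isLt
          omega
        have hcast : Fin.castLE (Nat.le_of_succ_le hi) l = Fin.castLE hi (Fin.castSucc l) :=
          Fin.ext rfl
        calc (s ∘ (Equiv.swap pi p)) (Fin.castLE (Nat.le_of_succ_le hi) l)
            = s (Fin.castLE (Nat.le_of_succ_le hi) l) := by
              simp only [Function.comp_apply]
              rw [Equiv.swap_apply_of_ne_of_ne hne1 hne2]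
          _ = (Fin.snoc x a : Fin (i+1) → Fin d) (Fin.castSucc l) := by
              rw [hcast]; exact hpre (Fin.castSucc l)
          _ = x l := by rw [Fin.snoc_castSucc]
    · simp only [mem_filter, mem_univ, true_and]
      refine ⟨hp, ?_⟩
      have hcast : Fin.castLE hi (Fin.last i) = pi := Fin.ext rfl
      calc (s ∘ (Equiv.swap pi p)) p = s pi := by
            simp only [Function.comp_apply, Equiv.swap_apply_right]
        _ = (Fin.snoc x a : Fin (i+1) → Fin d) (Fin.last i) := by
            rw [← hcast]; exact hpre (Fin.last i)
        _ = a := by rw [Fin.snoc_last]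
  · -- maps B into A
    rintro ⟨s, p⟩ hsp
    rw [hB, Finset.mem_sigma] at hsp
    obtain ⟨hsX, hp0⟩ := hsp
    rw [mem_filter] at hp0
    have hip : i ≤ (p : ℕ) := hp0.2.1
    have hspa : s p = a := hp0.2.2
    rw [hX, mem_filter] at hsX
    have hsT : s ∈ TC d n k := hsX.1
    have hpre : ∀ l : Fin i, s (Fin.castLE (Nat.le_of_succ_le hi) l) = x l := hsX.2
    show (⟨s ∘ (Equiv.swap pi p), p⟩ : (_ : Fin n → Fin d) × Fin n) ∈ A
    rw [hA, Finset.mem_sigma]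
    constructor
    · rw [hY, mem_filter]
      constructor
      · simp only [TC, mem_filter] at hsT ⊢
        exact ⟨mem_univ _, fun j => by
          rw [DeFinettiAux.symbolCount_comp s (Equiv.swap pi p) j]; exact hsT.2 j⟩
      · intro l
        refine Fin.lastCases ?_ ?_ l
        · have hcast : Fin.castLE hi (Fin.last i) = pi := Fin.ext rfl
          rw [hcast, Fin.snoc_last]
          simp only [Function.comp_apply, Equiv.swap_apply_left]
          exact hspa
        · intro l'
          have hne1 : Fin.castLE (Nat.le_of_succ_le hi) l' ≠ pi := by
            intro h
            have hv : (l' : ℕ) = i := congrArg Fin.val h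
            have := l'.isLt
            omega
          have hne2 : Fin.castLE (Nat.le_of_succ_le hi) l' ≠ p := by
            intro h
            have hv : (l' : ℕ) = (p : ℕ) := congrArg Fin.val h
            have := l'.isLt
            omega
          have hcast : Fin.castLE hi (Fin.castSucc l') = Fin.castLE (Nat.le_of_succ_le hi) l' :=
            Fin.ext rfl
          rw [Fin.snoc_castSucc, hcast]
          simp only [Function.comp_apply]
          rw [Equiv.swap_apply_of_ne_of_ne hne1 hne2]
          exact hpre l'
    · simp only [mem_filter, mem_univ, true_and]
      exact hip
  · rintro ⟨s, p⟩ _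
    have hf : (s ∘ (Equiv.swap pi p)) ∘ (Equiv.swap pi p) = s := by
      funext q
      simp [Function.comp, Equiv.swap_apply_self]
    exact congrArg (fun f => (⟨f, p⟩ : (_ : Fin n → Fin d) × Fin n)) hf
  · rintro ⟨s, p⟩ _
    have hf : (s ∘ (Equiv.swap pi p)) ∘ (Equiv.swap pi p) = s := by
      funext q
      simp [Function.comp, Equiv.swap_apply_self]
    exact congrArg (fun f => (⟨f, p⟩ : (_ : Fin n → Fin d) × Fin n)) hf

/-- Existence of a string with the given counts. -/
lemma TC_card_ne_zero (hk : ∑ j, k j = n) : (TC d n k).card ≠ 0 := by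
  classical
  rw [Finset.card_ne_zero]
  have hcard : Fintype.card (Σ j : Fin d, Fin (k j)) = Fintype.card (Fin n) := by
    simp [Fintype.card_sigma, hk]
  let e : (Σ j : Fin d, Fin (k j)) ≃ Fin n := Fintype.equivOfCardEq hcard
  refine ⟨fun i => (e.symm i).1, ?_⟩
  simp only [TC, mem_filter, mem_univ, true_and]
  intro j
  unfold symbolCount
  have h1 : (univ.filter fun i : Fin n => (e.symm i).1 = j).card
      = (univ.filter fun σ : (Σ j : Fin d, Fin (k j)) => σ.1 = j).card := by
    apply Finset.card_bij (fun i _ => e.symm i)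
    · intro i hi
      simp only [mem_filter, mem_univ, true_and] at hi ⊢
      exact hi
    · intro i1 _ i2 _ h
      exact e.symm.injective h
    · intro σ hσ
      refine ⟨e σ, ?_, by simp⟩
      simp only [mem_filter, mem_univ, true_and, Equiv.symm_apply_apply] at hσ ⊢
      exact hσ
  rw [h1]
  have h2 : (univ.filter fun σ : (Σ j : Fin d, Fin (k j)) => σ.1 = j).card
      = Fintype.card {σ : Σ j : Fin d, Fin (k j) // σ.1 = j} := by
    rw [Fintype.card_subtype]
  rw [h2]
  have e2 : {σ : Σ j : Fin d, Fin (k j) // σ.1 = j} ≃ Fin (k j) := by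
    refine ⟨fun σ => Fin.cast (congrArg k σ.2) σ.1.2, fun t => ⟨⟨j, t⟩, rfl⟩, ?_, ?_⟩
    · rintro ⟨⟨j', t⟩, h⟩
      subst h
      rfl
    · intro t
      rfl
  rw [Fintype.card_congr e2, Fintype.card_fin]


noncomputable def qv {i : ℕ} (hi : i ≤ n) (x : Fin i → Fin d) : ℝ :=
  (Cnt d n k hi x : ℝ) / ((TC d n k).card : ℝ)

noncomputable def pv {i : ℕ} (x : Fin i → Fin d) : ℝ :=
  ∏ l, (k (x l) : ℝ) / n

noncomputable def wv {i : ℕ} (x : Fin i → Fin d) (a : Fin d) : ℝ :=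
  ((k a - symbolCount x a : ℕ) : ℝ) / ((n : ℝ) - i)

section RealSide

variable {d n : ℕ} {k : Fin d → ℕ}
variable (hT : ((TC d n k).card : ℝ) ≠ 0)

lemma qv_nonneg {i : ℕ} (hi : i ≤ n) (x : Fin i → Fin d) : 0 ≤ qv d n k hi x := by
  unfold qv; positivity

lemma pv_nonneg {i : ℕ} (x : Fin i → Fin d) : 0 ≤ pv d n k x := by
  unfold pv
  apply Finset.prod_nonneg
  intro l _
  positivity

lemma wv_nonneg {i : ℕ} (hin : i < n) (x : Fin i → Fin d) (a : Fin d) :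
    0 ≤ wv d n k x a := by
  unfold wv
  apply div_nonneg (Nat.cast_nonneg _)
  have : (i : ℝ) < n := by exact_mod_cast hin
  linarith

include hT in
lemma sum_qv {i : ℕ} (hi : i ≤ n) : ∑ x : Fin i → Fin d, qv d n k hi x = 1 := by
  unfold qv
  rw [← Finset.sum_div]
  rw [div_eq_one_iff_eq hT]
  exact_mod_cast sum_Cnt d n k hi

lemma qv_zero {i : ℕ} (hi : i ≤ n) (x : Fin i → Fin d) (hq : Cnt d n k hi x = 0) :
    qv d n k hi x = 0 := by
  unfold qv; rw [hq]; simp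

include hT in
lemma qv_pos {i : ℕ} (hi : i ≤ n) (x : Fin i → Fin d) (hq : Cnt d n k hi x ≠ 0) :
    0 < qv d n k hi x := by
  unfold qv
  apply div_pos
  · exact_mod_cast Nat.pos_of_ne_zero hq
  · exact lt_of_le_of_ne (Nat.cast_nonneg _) (Ne.symm hT)

include hT in
lemma qv_snoc {i : ℕ} (hi : i + 1 ≤ n) (x : Fin i → Fin d) (a : Fin d) :
    qv d n k hi (Fin.snoc x a) = qv d n k (Nat.le_of_succ_le hi) x * wv d n k x a := by
  have hin : i < n := hi
  have hni : ((n : ℝ) - i) ≠ 0 := by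
    have : (i : ℝ) < n := by exact_mod_cast hin
    linarith
  have hc := Cnt_succ d n k hi x a
  have hcr : (Cnt d n k hi (Fin.snoc x a) : ℝ) * ((n : ℝ) - i)
      = (Cnt d n k (Nat.le_of_succ_le hi) x : ℝ) * ((k a - symbolCount x a : ℕ) : ℝ) := by
    have := congrArg (Nat.cast : ℕ → ℝ) hc
    rw [Nat.cast_mul, Nat.cast_mul, Nat.cast_sub hin.le] at this
    exact this
  unfold qv wv
  rw [div_mul_div_comm, div_eq_div_iff hT (by
    apply mul_ne_zero hT hni)]
  linear_combination ((TC d n k).card : ℝ) * hcr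

lemma sum_wv {i : ℕ} (hin : i < n) (hk : ∑ j, k j = n) (x : Fin i → Fin d)
    (hq : Cnt d n k (le_of_lt hin) x ≠ 0) : ∑ a, wv d n k x a = 1 := by
  have hle : ∀ a, symbolCount x a ≤ k a := Cnt_le_imp d n k (le_of_lt hin) x hq
  have hni : ((n : ℝ) - i) ≠ 0 := by
    have : (i : ℝ) < n := by exact_mod_cast hin
    linarith
  unfold wv
  rw [← Finset.sum_div, div_eq_one_iff_eq hni]
  have : ∀ a ∈ (Finset.univ : Finset (Fin d)),
      ((k a - symbolCount x a : ℕ) : ℝ) = (k a : ℝ) - (symbolCount x a : ℝ) := by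
    intro a _
    exact_mod_cast Nat.cast_sub (hle a)
  rw [Finset.sum_congr rfl this, Finset.sum_sub_distrib]
  have h1 : ∑ a, ((k a : ℝ)) = (n : ℝ) := by exact_mod_cast congrArg (Nat.cast : ℕ → ℝ) hk
  have h2 : ∑ a, ((symbolCount x a : ℝ)) = (i : ℝ) := by
    exact_mod_cast congrArg (Nat.cast : ℕ → ℝ) (DeFinettiAux.sum_symbolCount x)
  rw [h1, h2]

lemma pv_snoc {i : ℕ} (x : Fin i → Fin d) (a : Fin d) :
    pv d n k (Fin.snoc x a) = pv d n k x * ((k a : ℝ) / n) := by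
  unfold pv
  rw [Fin.prod_univ_castSucc]
  congr 1
  · apply Finset.prod_congr rfl
    intro l _
    rw [Fin.snoc_castSucc]
  · rw [Fin.snoc_last]

lemma symbolCount_pos {i : ℕ} (x : Fin i → Fin d) (l : Fin i) :
    0 < symbolCount x (x l) := by
  unfold symbolCount
  apply Finset.card_pos.mpr
  exact ⟨l, by simp⟩

omit hT in
lemma pv_pos {i : ℕ} (hi : i ≤ n) (x : Fin i → Fin d) (hq : Cnt d n k hi x ≠ 0)
    (hn : 0 < n) : 0 < pv d n k x := by
  unfold pv
  apply Finset.prod_pos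
  intro l _
  apply div_pos _ (by exact_mod_cast hn)
  have hle := Cnt_le_imp d n k hi x hq (x l)
  have := symbolCount_pos x l
  exact_mod_cast lt_of_lt_of_le this hle

lemma sum_pv (hk : ∑ j, k j = n) (hn : 0 < n) {i : ℕ} :
    ∑ x : Fin i → Fin d, pv d n k x = 1 := by
  unfold pv
  rw [← Fintype.prod_sum (fun (_ : Fin i) (a : Fin d) => (k a : ℝ) / n)]
  have : ∀ l ∈ (Finset.univ : Finset (Fin i)), (∑ a, (k a : ℝ) / n) = 1 := by
    intro l _
    rw [← Finset.sum_div]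
    rw [div_eq_one_iff_eq (by exact_mod_cast hn.ne')]
    exact_mod_cast congrArg (Nat.cast : ℕ → ℝ) hk
  rw [Finset.prod_congr rfl this, Finset.prod_const_one]

lemma sum_snoc {i : ℕ} (F : (Fin (i+1) → Fin d) → ℝ) :
    ∑ y : Fin (i+1) → Fin d, F y = ∑ x : Fin i → Fin d, ∑ b, F (Fin.snoc x b) := by
  rw [← Equiv.sum_comp (Fin.snocEquiv (fun _ => Fin d)) F]
  rw [Fintype.sum_prod_type]
  rw [Finset.sum_comm]
  apply Finset.sum_congr rfl
  intro x _
  apply Finset.sum_congr rfl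
  intro b _
  congr 1

lemma symbolCount_snoc_real {i : ℕ} (x : Fin i → Fin d) (b : Fin d) (a : Fin d) :
    ((symbolCount (Fin.snoc x b : Fin (i+1) → Fin d) a : ℝ))
      = (symbolCount x a : ℝ) + if b = a then 1 else 0 := by
  rw [DeFinettiAux.symbolCount_snoc]
  push_cast
  split <;> simp


omit hT in
lemma sum_qv_wv {i : ℕ} (hi : i ≤ n) (hin : i < n) (a : Fin d)
    (G : (Fin i → Fin d) → ℝ) :
    ∑ x, qv d n k hi x * wv d n k x a * G x
      = ((k a : ℝ) * (∑ x, qv d n k hi x * G x)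
          - ∑ x, qv d n k hi x * (symbolCount x a : ℝ) * G x) / ((n:ℝ) - i) := by
  have e : ∀ x ∈ (Finset.univ : Finset (Fin i → Fin d)),
      qv d n k hi x * wv d n k x a * G x
        = ((k a : ℝ) * (qv d n k hi x * G x)
            - qv d n k hi x * (symbolCount x a : ℝ) * G x) / ((n:ℝ) - i) := by
    intro x _
    by_cases hq : Cnt d n k hi x = 0
    · rw [qv_zero _ _ hq]
      ring
    · have hcast : ((k a - symbolCount x a : ℕ) : ℝ) = (k a : ℝ) - (symbolCount x a : ℝ) :=
        Nat.cast_sub (Cnt_le_imp d n k hi x hq a)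
      unfold wv
      rw [hcast]
      ring
  rw [Finset.sum_congr rfl e, ← Finset.sum_div, Finset.sum_sub_distrib, ← Finset.mul_sum]

omit hT in
lemma qv_sum_wv {i : ℕ} (hi : i ≤ n) (hin : i < n) (hk : ∑ j, k j = n)
    (x : Fin i → Fin d) (g : ℝ) :
    qv d n k hi x * g * (∑ b, wv d n k x b) = qv d n k hi x * g := by
  by_cases hq : Cnt d n k hi x = 0
  · rw [qv_zero _ _ hq]
    ring
  · have : ∑ b, wv d n k x b = 1 := by
      have := sum_wv hin hk x (by exact hq)
      exact this
    rw [this, mul_one]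

include hT in
lemma moments (hk : ∑ j, k j = n) (hn2 : 2 ≤ n) :
    ∀ (i : ℕ) (hi : i ≤ n) (a : Fin d),
      (∑ x : Fin i → Fin d, qv d n k hi x * (symbolCount x a : ℝ) = i * k a / n)
      ∧ (∑ x : Fin i → Fin d, qv d n k hi x * (symbolCount x a : ℝ)^2
          = (i : ℝ) * ((i:ℝ) - 1) * (k a) * ((k a : ℝ) - 1) / (n * ((n:ℝ) - 1))
            + i * k a / n) := by
  intro i
  induction i with
  | zero =>
    intro hi a
    have hz : ∀ x : Fin 0 → Fin d, symbolCount x a = 0 := by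
      intro x
      simp [symbolCount]
    constructor
    · rw [Finset.sum_eq_zero (fun x _ => by rw [hz x]; norm_num)]
      norm_num
    · rw [Finset.sum_eq_zero (fun x _ => by rw [hz x]; norm_num)]
      norm_num
  | succ i ih =>
    intro hi a
    set hi' : i ≤ n := Nat.le_of_succ_le hi with hhi'
    have hin : i < n := hi
    have hE0 : ∑ x : Fin i → Fin d, qv d n k hi' x = 1 := sum_qv hT hi'
    have hE1 := (ih hi' a).1
    have hE2 := (ih hi' a).2
    have hnn : (0:ℝ) < n := by
      have h0 : 0 < n := lt_of_lt_of_le (by norm_num) hn2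
      exact_mod_cast h0
    have hn1 : ((n:ℝ) - 1) ≠ 0 := by
      have : (2:ℝ) ≤ n := by exact_mod_cast hn2
      linarith
    have hni : ((n:ℝ) - i) ≠ 0 := by
      have : (i : ℝ) < n := by exact_mod_cast hin
      linarith
    constructor
    · -- first moment
      rw [sum_snoc]
      have hterm : ∀ (x : Fin i → Fin d) (b : Fin d),
          qv d n k hi (Fin.snoc x b) * ((symbolCount (Fin.snoc x b : Fin (i+1) → Fin d) a : ℝ))
            = qv d n k hi' x * (symbolCount x a : ℝ) * wv d n k x b
              + (if b = a then qv d n k hi' x * wv d n k x b else 0) := by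
        intro x b
        rw [qv_snoc hT hi x b, symbolCount_snoc_real]
        split <;> ring
      have hsum1 : ∀ x : Fin i → Fin d,
          ∑ b, qv d n k hi (Fin.snoc x b) * ((symbolCount (Fin.snoc x b : Fin (i+1) → Fin d) a : ℝ))
            = qv d n k hi' x * (symbolCount x a : ℝ) + qv d n k hi' x * wv d n k x a := by
        intro x
        rw [Finset.sum_congr rfl (fun b _ => hterm x b), Finset.sum_add_distrib]
        congr 1
        · rw [← Finset.mul_sum]
          exact qv_sum_wv hi' hin hk x _
        · rw [Finset.sum_ite_eq' Finset.univ a (fun b => qv d n k hi' x * wv d n k x b)]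
          simp
      rw [Finset.sum_congr rfl (fun x _ => hsum1 x), Finset.sum_add_distrib, hE1]
      have hW1 := sum_qv_wv (k := k) hi' hin a (fun _ => 1)
      simp only [mul_one] at hW1
      rw [hW1, hE0, hE1]
      push_cast
      field_simp
    · -- second moment
      rw [sum_snoc]
      have hterm : ∀ (x : Fin i → Fin d) (b : Fin d),
          qv d n k hi (Fin.snoc x b) * ((symbolCount (Fin.snoc x b : Fin (i+1) → Fin d) a : ℝ))^2
            = qv d n k hi' x * (symbolCount x a : ℝ)^2 * wv d n k x b
              + (if b = a then qv d n k hi' x * wv d n k x b * (2 * (symbolCount x a : ℝ) + 1) else 0) := by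
        intro x b
        rw [qv_snoc hT hi x b, symbolCount_snoc_real]
        split <;> ring
      have hsum1 : ∀ x : Fin i → Fin d,
          ∑ b, qv d n k hi (Fin.snoc x b) * ((symbolCount (Fin.snoc x b : Fin (i+1) → Fin d) a : ℝ))^2
            = qv d n k hi' x * (symbolCount x a : ℝ)^2
              + qv d n k hi' x * wv d n k x a * (2 * (symbolCount x a : ℝ) + 1) := by
        intro x
        rw [Finset.sum_congr rfl (fun b _ => hterm x b), Finset.sum_add_distrib]
        congr 1
        · rw [← Finset.mul_sum]
          exact qv_sum_wv hi' hin hk x _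
        · rw [Finset.sum_ite_eq' Finset.univ a
            (fun b => qv d n k hi' x * wv d n k x b * (2 * (symbolCount x a : ℝ) + 1))]
          simp
      rw [Finset.sum_congr rfl (fun x _ => hsum1 x), Finset.sum_add_distrib, hE2]
      have hW2 := sum_qv_wv (k := k) hi' hin a (fun x => 2 * (symbolCount x a : ℝ) + 1)
      have hA : ∑ x, qv d n k hi' x * (2 * (symbolCount x a : ℝ) + 1)
          = 2 * ((i:ℝ) * k a / n) + 1 := by
        have e : ∀ x ∈ (Finset.univ : Finset (Fin i → Fin d)),
            qv d n k hi' x * (2 * (symbolCount x a : ℝ) + 1)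
              = 2 * (qv d n k hi' x * (symbolCount x a : ℝ)) + qv d n k hi' x := by
          intro x _
          ring
        rw [Finset.sum_congr rfl e, Finset.sum_add_distrib, ← Finset.mul_sum, hE1, hE0]
      have hB : ∑ x, qv d n k hi' x * (symbolCount x a : ℝ) * (2 * (symbolCount x a : ℝ) + 1)
          = 2 * ((i : ℝ) * ((i:ℝ) - 1) * (k a) * ((k a : ℝ) - 1) / (n * ((n:ℝ) - 1))
              + i * k a / n) + (i:ℝ) * k a / n := by
        have e : ∀ x ∈ (Finset.univ : Finset (Fin i → Fin d)),
            qv d n k hi' x * (symbolCount x a : ℝ) * (2 * (symbolCount x a : ℝ) + 1)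
              = 2 * (qv d n k hi' x * (symbolCount x a : ℝ)^2)
                + qv d n k hi' x * (symbolCount x a : ℝ) := by
          intro x _
          ring
        rw [Finset.sum_congr rfl e, Finset.sum_add_distrib, ← Finset.mul_sum, hE2, hE1]
      rw [hW2, hA, hB]
      push_cast
      field_simp
      ring


noncomputable def DKL {i : ℕ} (hi : i ≤ n) : ℝ :=
  ∑ x : Fin i → Fin d, qv d n k hi x * Real.log (qv d n k hi x / pv d n k x)

include hT in
lemma DKL_zero (hi : (0:ℕ) ≤ n) : DKL (d := d) (n := n) (k := k) hi = 0 := by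
  unfold DKL
  apply Finset.sum_eq_zero
  intro x _
  have hc : Cnt d n k hi x = (TC d n k).card := by
    unfold Cnt
    rw [Finset.filter_true_of_mem]
    intro s _
    intro l
    exact l.elim0
  have hq1 : qv d n k hi x = 1 := by
    unfold qv
    rw [hc, div_self hT]
  have hp1 : pv d n k x = 1 := by
    unfold pv
    simp
  rw [hq1, hp1]
  norm_num

include hT in
lemma DKL_step (hk : ∑ j, k j = n) (hn2 : 2 ≤ n) {i : ℕ} (hi : i + 1 ≤ n) :
    DKL (d := d) (n := n) (k := k) hi
      ≤ DKL (d := d) (n := n) (k := k) (Nat.le_of_succ_le hi)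
        + ((d:ℝ) - 1) * i / (((n:ℝ) - 1) * ((n:ℝ) - i)) := by
  set hi' : i ≤ n := Nat.le_of_succ_le hi with hhi'
  have hin : i < n := hi
  have hnn : (0:ℝ) < n := by
    have h0 : 0 < n := lt_of_lt_of_le (by norm_num) hn2
    exact_mod_cast h0
  have hn1 : (0:ℝ) < (n:ℝ) - 1 := by
    have : (2:ℝ) ≤ n := by exact_mod_cast hn2
    linarith
  have hni : (0:ℝ) < (n:ℝ) - i := by
    have : (i : ℝ) < n := by exact_mod_cast hin
    linarith
  have hTpos : (0:ℝ) < ((TC d n k).card : ℝ) :=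
    lt_of_le_of_ne (Nat.cast_nonneg _) (Ne.symm hT)
  -- per-(x,b) splitting of the log
  have hperb : ∀ (x : Fin i → Fin d) (b : Fin d),
      qv d n k hi (Fin.snoc x b)
          * Real.log (qv d n k hi (Fin.snoc x b) / pv d n k (Fin.snoc x b))
        = qv d n k hi' x * wv d n k x b * Real.log (qv d n k hi' x / pv d n k x)
          + qv d n k hi' x * wv d n k x b * Real.log (wv d n k x b / ((k b : ℝ) / n)) := by
    intro x b
    rw [qv_snoc hT hi x b, pv_snoc]
    by_cases hq : Cnt d n k hi' x = 0
    · rw [qv_zero _ _ hq]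
      ring
    · have hqpos : 0 < qv d n k hi' x := qv_pos hT hi' x hq
      have hppos : 0 < pv d n k x := pv_pos hi' x hq (by omega)
      by_cases hw : wv d n k x b = 0
      · rw [hw]
        ring
      · have hwpos : 0 < wv d n k x b :=
          lt_of_le_of_ne (wv_nonneg hin x b) (Ne.symm hw)
        have hkb : 0 < (k b : ℝ) / n := by
          have h1 : k b - symbolCount x b ≠ 0 := by
            intro h0
            apply hw
            unfold wv
            rw [h0]
            simp
          have : 0 < k b := by omega
          have : (0:ℝ) < (k b : ℝ) := by exact_mod_cast this
          positivity
        have harg : qv d n k hi' x * wv d n k x b / (pv d n k x * ((k b : ℝ) / n))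
            = (qv d n k hi' x / pv d n k x) * (wv d n k x b / ((k b : ℝ) / n)) := by
          field_simp
        rw [harg, Real.log_mul (by positivity) (by positivity)]
        ring
  unfold DKL
  rw [sum_snoc (fun y => qv d n k hi y * Real.log (qv d n k hi y / pv d n k y))]
  have hsplit : ∀ x : Fin i → Fin d,
      ∑ b, (qv d n k hi (Fin.snoc x b)
          * Real.log (qv d n k hi (Fin.snoc x b) / pv d n k (Fin.snoc x b)))
        = qv d n k hi' x * Real.log (qv d n k hi' x / pv d n k x)
          + ∑ b, qv d n k hi' x * wv d n k x b * Real.log (wv d n k x b / ((k b : ℝ) / n)) := by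
    intro x
    rw [Finset.sum_congr rfl (fun b _ => hperb x b), Finset.sum_add_distrib]
    congr 1
    have e : ∀ b ∈ (Finset.univ : Finset (Fin d)),
        qv d n k hi' x * wv d n k x b * Real.log (qv d n k hi' x / pv d n k x)
          = qv d n k hi' x * Real.log (qv d n k hi' x / pv d n k x) * wv d n k x b := by
      intro b _
      ring
    rw [Finset.sum_congr rfl e, ← Finset.mul_sum]
    exact qv_sum_wv hi' hin hk x _
  rw [Finset.sum_congr rfl (fun x _ => hsplit x), Finset.sum_add_distrib]
  apply add_le_add_right
  -- now bound the excess term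
  have hpoint : ∀ (x : Fin i → Fin d) (b : Fin d),
      qv d n k hi' x * wv d n k x b * Real.log (wv d n k x b / ((k b : ℝ) / n))
        ≤ qv d n k hi' x * (wv d n k x b ^ 2 * ((n:ℝ) / k b) - wv d n k x b) := by
    intro x b
    by_cases hq : Cnt d n k hi' x = 0
    · rw [qv_zero _ _ hq]
      simp
    · by_cases hw : wv d n k x b = 0
      · rw [hw]
        simp
      · have hwpos : 0 < wv d n k x b :=
          lt_of_le_of_ne (wv_nonneg hin x b) (Ne.symm hw)
        have hkb0 : 0 < k b := by
          by_contra h0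
          apply hw
          unfold wv
          have : k b - symbolCount x b = 0 := by omega
          rw [this]
          simp
        have hkbr : (0:ℝ) < (k b : ℝ) := by exact_mod_cast hkb0
        have hz : (0:ℝ) < wv d n k x b / ((k b : ℝ) / n) := by positivity
        have hlog := Real.log_le_sub_one_of_pos hz
        have hqpos : 0 < qv d n k hi' x := qv_pos hT hi' x hq
        have e : wv d n k x b / ((k b : ℝ) / n) = wv d n k x b * ((n:ℝ) / k b) := by
          field_simp
        calc qv d n k hi' x * wv d n k x b * Real.log (wv d n k x b / ((k b : ℝ) / n))
            ≤ qv d n k hi' x * wv d n k x b * (wv d n k x b / ((k b : ℝ) / n) - 1) := by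
              apply mul_le_mul_of_nonneg_left hlog (by positivity)
          _ = qv d n k hi' x * (wv d n k x b ^ 2 * ((n:ℝ) / k b) - wv d n k x b) := by
              rw [e]
              ring
  calc ∑ x : Fin i → Fin d, ∑ b, qv d n k hi' x * wv d n k x b
          * Real.log (wv d n k x b / ((k b : ℝ) / n))
      ≤ ∑ x : Fin i → Fin d, ∑ b, qv d n k hi' x
          * (wv d n k x b ^ 2 * ((n:ℝ) / k b) - wv d n k x b) := by
        apply Finset.sum_le_sum
        intro x _
        exact Finset.sum_le_sum (fun b _ => hpoint x b)
    _ = (∑ b, ((n:ℝ) / k b) * ∑ x : Fin i → Fin d, qv d n k hi' x * wv d n k x b ^ 2) - 1 := by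
        have e1 : ∀ x ∈ (Finset.univ : Finset (Fin i → Fin d)),
            ∑ b, qv d n k hi' x * (wv d n k x b ^ 2 * ((n:ℝ) / k b) - wv d n k x b)
              = (∑ b, ((n:ℝ) / k b) * (qv d n k hi' x * wv d n k x b ^ 2))
                - qv d n k hi' x * 1 * (∑ b, wv d n k x b) := by
          intro x _
          rw [Finset.mul_sum, ← Finset.sum_sub_distrib]
          apply Finset.sum_congr rfl
          intro b _
          ring
        rw [Finset.sum_congr rfl e1, Finset.sum_sub_distrib]
        congr 1
        · rw [Finset.sum_comm]
          apply Finset.sum_congr rfl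
          intro b _
          rw [Finset.mul_sum]
        · rw [Finset.sum_congr rfl
            (fun x _ => qv_sum_wv (k := k) hi' hin hk x 1), ]
          have e2 : ∀ x ∈ (Finset.univ : Finset (Fin i → Fin d)),
              qv d n k hi' x * 1 = qv d n k hi' x := fun x _ => mul_one _
          rw [Finset.sum_congr rfl e2, sum_qv hT hi']
    _ ≤ ((d:ℝ) - 1) * i / (((n:ℝ) - 1) * ((n:ℝ) - i)) := by
        have hmom := moments hT hk hn2 i hi'
        have hVb : ∀ b : Fin d,
            ∑ x : Fin i → Fin d, qv d n k hi' x * wv d n k x b ^ 2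
              = ((k b : ℝ)^2 * 1 - 2 * (k b : ℝ) * ((i:ℝ) * k b / n)
                  + ((i : ℝ) * ((i:ℝ) - 1) * (k b) * ((k b : ℝ) - 1) / (n * ((n:ℝ) - 1))
                      + i * k b / n)) / ((n:ℝ) - i)^2 := by
          intro b
          have e : ∀ x ∈ (Finset.univ : Finset (Fin i → Fin d)),
              qv d n k hi' x * wv d n k x b ^ 2
                = ((k b : ℝ)^2 * qv d n k hi' x
                    - 2 * (k b : ℝ) * (qv d n k hi' x * (symbolCount x b : ℝ))
                    + qv d n k hi' x * (symbolCount x b : ℝ)^2) / ((n:ℝ) - i)^2 := by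
            intro x _
            by_cases hq : Cnt d n k hi' x = 0
            · rw [qv_zero _ _ hq]
              ring
            · have hcast : ((k b - symbolCount x b : ℕ) : ℝ)
                  = (k b : ℝ) - (symbolCount x b : ℝ) :=
                Nat.cast_sub (Cnt_le_imp d n k hi' x hq b)
              unfold wv
              rw [hcast]
              field_simp
              ring
          rw [Finset.sum_congr rfl e, ← Finset.sum_div]
          rw [Finset.sum_add_distrib, Finset.sum_sub_distrib, ← Finset.mul_sum, ← Finset.mul_sum]
          rw [sum_qv hT hi', (hmom b).1, (hmom b).2]
        set J := (Finset.univ : Finset (Fin d)).filter (fun b => k b ≠ 0) with hJ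
        have hsplitJ : (∑ b, ((n:ℝ) / k b)
              * ∑ x : Fin i → Fin d, qv d n k hi' x * wv d n k x b ^ 2)
            = ∑ b ∈ J, ((n:ℝ) / k b)
              * ∑ x : Fin i → Fin d, qv d n k hi' x * wv d n k x b ^ 2 := by
          rw [← Finset.sum_filter_add_sum_filter_not Finset.univ (fun b => k b ≠ 0)]
          have hzero : ∀ b ∈ (Finset.univ : Finset (Fin d)).filter (fun b => ¬ k b ≠ 0),
              ((n:ℝ) / k b) * ∑ x : Fin i → Fin d, qv d n k hi' x * wv d n k x b ^ 2 = 0 := by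
            intro b hb
            rw [Finset.mem_filter] at hb
            have : (k b : ℝ) = 0 := by
              have := hb.2
              push_neg at this
              exact_mod_cast this
            rw [this, div_zero, zero_mul]
          rw [Finset.sum_eq_zero hzero, add_zero]
        have hKsum : ∑ b ∈ J, (k b : ℝ) = (n : ℝ) := by
          have h1 : ∑ b ∈ J, k b = ∑ b, k b := Finset.sum_filter_ne_zero _
          have h2 : ∑ b ∈ J, (k b:ℝ) = ((∑ b ∈ J, k b : ℕ) : ℝ) := by push_cast; rfl
          rw [h2, h1, hk]
        set Dp : ℝ := (J.card : ℝ) with hDp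
        have hDple : Dp ≤ (d : ℝ) := by
          rw [hDp]
          have := Finset.card_filter_le (Finset.univ : Finset (Fin d)) (fun b => k b ≠ 0)
          have h2 : (Finset.univ : Finset (Fin d)).card = d := by simp
          rw [h2] at this
          exact_mod_cast this
        have hJval : ∀ b ∈ J, ((n:ℝ) / k b)
              * ∑ x : Fin i → Fin d, qv d n k hi' x * wv d n k x b ^ 2
            = (((n:ℝ) - 2*i + (i:ℝ)*((i:ℝ)-1)/((n:ℝ)-1)) * (k b : ℝ)
                + ((i:ℝ) - (i:ℝ)*((i:ℝ)-1)/((n:ℝ)-1))) / ((n:ℝ) - i)^2 := by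
          intro b hb
          rw [Finset.mem_filter] at hb
          have hkb : (k b : ℝ) ≠ 0 := by
            exact_mod_cast hb.2
          rw [hVb b]
          field_simp
          ring
        rw [hsplitJ, Finset.sum_congr rfl hJval, ← Finset.sum_div, Finset.sum_add_distrib,
          ← Finset.mul_sum, hKsum, Finset.sum_const, nsmul_eq_mul, ← hDp]
        have heq : ((((n:ℝ) - 2*i + (i:ℝ)*((i:ℝ)-1)/((n:ℝ)-1)) * (n : ℝ)
                + Dp * ((i:ℝ) - (i:ℝ)*((i:ℝ)-1)/((n:ℝ)-1))) / ((n:ℝ) - i)^2) - 1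
            = (i:ℝ) * (Dp - 1) / (((n:ℝ) - 1) * ((n:ℝ) - i)) := by
          field_simp
          ring
        rw [heq]
        rw [div_le_div_iff_of_pos_right (by positivity)]
        have hi0 : (0:ℝ) ≤ (i:ℝ) := Nat.cast_nonneg _
        nlinarith [hi0, hDple]


include hT in
lemma DKL_le (hk : ∑ j, k j = n) (hn2 : 2 ≤ n) :
    ∀ (i : ℕ) (hi : i ≤ n),
      DKL (d := d) (n := n) (k := k) hi
        ≤ ((d:ℝ) - 1) / ((n:ℝ) - 1) * ∑ l ∈ Finset.range i, (l:ℝ) / ((n:ℝ) - l) := by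
  intro i
  induction i with
  | zero =>
    intro hi
    rw [DKL_zero hT hi]
    simp
  | succ i ih =>
    intro hi
    calc DKL (d := d) (n := n) (k := k) hi
        ≤ DKL (d := d) (n := n) (k := k) (Nat.le_of_succ_le hi)
            + ((d:ℝ) - 1) * i / (((n:ℝ) - 1) * ((n:ℝ) - i)) := DKL_step hT hk hn2 hi
      _ ≤ ((d:ℝ) - 1) / ((n:ℝ) - 1) * ∑ l ∈ Finset.range i, (l:ℝ) / ((n:ℝ) - l)
            + ((d:ℝ) - 1) * i / (((n:ℝ) - 1) * ((n:ℝ) - i)) :=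
          add_le_add_left (ih (Nat.le_of_succ_le hi)) _
      _ = ((d:ℝ) - 1) / ((n:ℝ) - 1) * ∑ l ∈ Finset.range (i+1), (l:ℝ) / ((n:ℝ) - l) := by
          rw [Finset.sum_range_succ, mul_add, div_mul_div_comm]

end RealSide

end DeFinettiAux


open DeFinettiAux in
/-- **Inequality (eqDiaconis)** (finite de Finetti-type bound for a single type class over
a `d`-letter alphabet). Fix `d ≥ 1`, `n ≥ 1`, `1 ≤ m ≤ n` and a composition
`(k_0, …, k_{d-1})` of `n`. Let `Q` be the marginal on the first `m` coordinates of the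
uniform distribution on the type class `T(k_0,…,k_{d-1}) ⊆ {0,…,d-1}^n`, and let
`γ(j) = k_j/n`. Then `∑_x |Q(x) - ∏_i γ(x_i)| ≤ 2dm/n`. -/
theorem typeClass_marginal_close_to_product
    (d n m : ℕ) (hd : 1 ≤ d) (hn : 1 ≤ n) (hm1 : 1 ≤ m) (hmn : m ≤ n)
    (k : Fin d → ℕ) (hk : ∑ j, k j = n) :
    ∑ x : Fin m → Fin d,
      |((Finset.univ.filter fun s : Fin n → Fin d =>
            (∀ j, symbolCount s j = k j) ∧ ∀ i : Fin m, s (Fin.castLE hmn i) = x i).card : ℝ)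
          / ((Finset.univ.filter fun s : Fin n → Fin d =>
            ∀ j, symbolCount s j = k j).card : ℝ)
        - ∏ i, (k (x i) : ℝ) / n|
      ≤ 2 * d * m / n := by
  have hT0 : (TC d n k).card ≠ 0 := TC_card_ne_zero d n k hk
  have hT : ((TC d n k).card : ℝ) ≠ 0 := by exact_mod_cast hT0
  have hn0 : (0:ℝ) < n := by exact_mod_cast hn
  have hrw : ∀ x : Fin m → Fin d,
      ((Finset.univ.filter fun s : Fin n → Fin d =>
            (∀ j, symbolCount s j = k j) ∧ ∀ i : Fin m, s (Fin.castLE hmn i) = x i).card : ℝ)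
          / ((Finset.univ.filter fun s : Fin n → Fin d =>
            ∀ j, symbolCount s j = k j).card : ℝ)
        - ∏ i, (k (x i) : ℝ) / n
      = qv d n k hmn x - pv d n k x := by
    intro x
    have h1 : (Finset.univ.filter fun s : Fin n → Fin d =>
          (∀ j, symbolCount s j = k j) ∧ ∀ i : Fin m, s (Fin.castLE hmn i) = x i)
        = (TC d n k).filter (fun s => ∀ l : Fin m, s (Fin.castLE hmn l) = x l) := by
      rw [DeFinettiAux.TC, Finset.filter_filter]
    rw [h1]
    rfl
  rw [Finset.sum_congr rfl (fun x _ => by rw [hrw x])]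
  by_cases hcase : n ≤ d * m
  · -- trivial case
    calc ∑ x : Fin m → Fin d, |qv d n k hmn x - pv d n k x|
        ≤ ∑ x : Fin m → Fin d, (qv d n k hmn x + pv d n k x) := by
          apply Finset.sum_le_sum
          intro x _
          calc |qv d n k hmn x - pv d n k x| ≤ |qv d n k hmn x| + |pv d n k x| := abs_sub _ _
            _ = qv d n k hmn x + pv d n k x := by
                rw [abs_of_nonneg (qv_nonneg hmn x), abs_of_nonneg (pv_nonneg x)]
      _ = 2 := by
          rw [Finset.sum_add_distrib, sum_qv hT hmn, sum_pv hk (by omega)]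
          norm_num
      _ ≤ 2 * d * m / n := by
          rw [le_div_iff₀ hn0]
          have hnd : (n:ℝ) ≤ (d:ℝ) * m := by exact_mod_cast hcase
          nlinarith
  · -- main case : d * m < n
    push_neg at hcase
    have hdm1 : 1 ≤ d * m := Nat.one_le_iff_ne_zero.mpr (by positivity)
    have hn2 : 2 ≤ n := by omega
    have habs : ∀ x : Fin m → Fin d, pv d n k x = 0 → qv d n k hmn x = 0 := by
      intro x hpx
      by_contra hqx
      have hc : Cnt d n k hmn x ≠ 0 := fun h0 => hqx (qv_zero hmn x h0)
      exact (ne_of_gt (pv_pos hmn x hc (by omega))) hpx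
    have hpk := pinsker_finset (fun x : Fin m → Fin d => qv d n k hmn x)
      (fun x => pv d n k x) (fun x => qv_nonneg hmn x) (fun x => pv_nonneg x)
      (sum_qv hT hmn) (sum_pv hk (by omega)) habs
    have hDKL : (∑ x : Fin m → Fin d, qv d n k hmn x
        * Real.log (qv d n k hmn x / pv d n k x)) = DKL (d := d) (n := n) (k := k) hmn := rfl
    rw [hDKL] at hpk
    have h2 := DKL_le hT hk hn2 m hmn
    -- numeric facts
    have hd1 : (1:ℝ) ≤ d := by exact_mod_cast hd
    have hm1r : (1:ℝ) ≤ m := by exact_mod_cast hm1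
    have hdmn : (d:ℝ) * m + 1 ≤ n := by
      have : d * m + 1 ≤ n := hcase
      exact_mod_cast this
    have hn1p : (0:ℝ) < (n:ℝ) - 1 := by
      have : (2:ℝ) ≤ n := by exact_mod_cast hn2
      linarith
    have hnm : (0:ℝ) < (n:ℝ) - m := by
      have hmd : (m:ℝ) ≤ (d:ℝ) * m := le_mul_of_one_le_left (by linarith) hd1
      linarith
    have hDd1 : (0:ℝ) ≤ (d:ℝ) - 1 := by linarith
    have hsum : ∑ l ∈ Finset.range m, (l:ℝ) / ((n:ℝ) - l)
        ≤ (m:ℝ) * ((m:ℝ) / ((n:ℝ) - m)) := by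
      have hb : ∀ l ∈ Finset.range m, (l:ℝ) / ((n:ℝ) - l) ≤ (m:ℝ) / ((n:ℝ) - m) := by
        intro l hl
        rw [Finset.mem_range] at hl
        have hlm : (l:ℝ) ≤ m := by
          have : l ≤ m := le_of_lt hl
          exact_mod_cast this
        apply div_le_div₀ (by linarith) hlm hnm (by linarith)
      calc ∑ l ∈ Finset.range m, (l:ℝ) / ((n:ℝ) - l)
          ≤ ∑ _l ∈ Finset.range m, (m:ℝ) / ((n:ℝ) - m) := Finset.sum_le_sum hb
        _ = (m:ℝ) * ((m:ℝ) / ((n:ℝ) - m)) := by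
            rw [Finset.sum_const, Finset.card_range, nsmul_eq_mul]
    set L : ℝ := ∑ x : Fin m → Fin d, |qv d n k hmn x - pv d n k x| with hLdef
    have hL0 : 0 ≤ L := Finset.sum_nonneg (fun x _ => abs_nonneg _)
    have hB0 : (0:ℝ) ≤ 2 * d * m / n := by positivity
    have c2 : L^2 ≤ 2 * (((d:ℝ) - 1) / ((n:ℝ) - 1) * ((m:ℝ) * ((m:ℝ) / ((n:ℝ) - m)))) := by
      calc L^2 ≤ 2 * DKL (d := d) (n := n) (k := k) hmn := hpk
        _ ≤ 2 * (((d:ℝ) - 1) / ((n:ℝ) - 1) * ∑ l ∈ Finset.range m, (l:ℝ) / ((n:ℝ) - l)) := by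
            linarith
        _ ≤ 2 * (((d:ℝ) - 1) / ((n:ℝ) - 1) * ((m:ℝ) * ((m:ℝ) / ((n:ℝ) - m)))) := by
            have := mul_le_mul_of_nonneg_left hsum (div_nonneg hDd1 hn1p.le)
            linarith
    have key : 2 * (((d:ℝ) - 1) / ((n:ℝ) - 1) * ((m:ℝ) * ((m:ℝ) / ((n:ℝ) - m))))
        ≤ (2 * (d:ℝ) * m / n)^2 := by
      have hne1 : ((n:ℝ) - 1) ≠ 0 := ne_of_gt hn1p
      have hne2 : ((n:ℝ) - m) ≠ 0 := ne_of_gt hnm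
      have hne3 : (n:ℝ) ≠ 0 := ne_of_gt hn0
      have e1 : 2 * (((d:ℝ) - 1) / ((n:ℝ) - 1) * ((m:ℝ) * ((m:ℝ) / ((n:ℝ) - m))))
          = (2 * ((d:ℝ) - 1) * (m:ℝ)^2) / (((n:ℝ) - 1) * ((n:ℝ) - m)) := by
        field_simp
      have e2 : (2 * (d:ℝ) * m / n)^2 = (4 * (d:ℝ)^2 * (m:ℝ)^2) / ((n:ℝ)^2) := by
        ring
      rw [e1, e2, div_le_div_iff₀ (by positivity) (by positivity)]
      have f1 : (n:ℝ) * ((d:ℝ) - 1) + 1 ≤ (d:ℝ) * ((n:ℝ) - m) := by nlinarith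
      have f2 : (n:ℝ) ≤ 2 * ((n:ℝ) - 1) := by
        have : (2:ℝ) ≤ n := by exact_mod_cast hn2
        linarith
      have hmid0 : (0:ℝ) ≤ (n:ℝ) * ((d:ℝ) - 1) + 1 := by
        have := mul_nonneg hn0.le hDd1
        linarith
      have g1 : (d:ℝ) * n * ((n:ℝ) * ((d:ℝ) - 1) + 1)
          ≤ ((d:ℝ) * (2 * ((n:ℝ) - 1))) * ((d:ℝ) * ((n:ℝ) - m)) := by
        apply mul_le_mul (mul_le_mul_of_nonneg_left f2 (by linarith)) f1 hmid0 (by positivity)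
      have g2 : ((d:ℝ) - 1) * (n:ℝ)^2 ≤ (d:ℝ) * n * ((n:ℝ) * ((d:ℝ) - 1) + 1) := by
        nlinarith [sq_nonneg ((n:ℝ) * ((d:ℝ) - 1))]
      have g3 : ((d:ℝ) - 1) * (n:ℝ)^2
          ≤ ((d:ℝ) * (2 * ((n:ℝ) - 1))) * ((d:ℝ) * ((n:ℝ) - m)) := le_trans g2 g1
      have g4 := mul_le_mul_of_nonneg_left g3 (by positivity : (0:ℝ) ≤ 2 * (m:ℝ)^2)
      calc 2 * ((d:ℝ) - 1) * (m:ℝ)^2 * (n:ℝ)^2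
          = 2 * (m:ℝ)^2 * (((d:ℝ) - 1) * (n:ℝ)^2) := by ring
        _ ≤ 2 * (m:ℝ)^2 * (((d:ℝ) * (2 * ((n:ℝ) - 1))) * ((d:ℝ) * ((n:ℝ) - m))) := g4
        _ = 4 * (d:ℝ)^2 * (m:ℝ)^2 * (((n:ℝ) - 1) * ((n:ℝ) - m)) := by ring
    have hfin : L^2 ≤ (2 * (d:ℝ) * m / n)^2 := le_trans c2 key
    have hs := Real.sqrt_le_sqrt hfin
    rwa [Real.sqrt_sq hL0, Real.sqrt_sq hB0] at hs
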